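/- Let R be an integral domain of finite Krull dimension with power stable range one, i.e., for all x, y ∈ R with y ≠ 0 and (x, y) = (1) as ideals, there exist an integer n ≥ 1 and a ∈ R such that x^n + a·y is a unit of R. Then R has enough homogeneous polynomials. -/

import Mathlib

open MvPolynomial Pointwise

section Aux

variable {R : Type*} [CommRing R]

/-- Evaluations at componentwise-congruent points are congruent mod an ideal. -/
lemma eval_sub_eval_mem {σ : Type*} (I : Ideal R) (v w : σ → R)
    (h : ∀ i, v i - w i ∈ I) (f : MvPolynomial σ R) :
    MvPolynomial.eval v f - MvPolynomial.eval w f ∈ I := by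
  rw [← Ideal.Quotient.eq]
  have hv := MvPolynomial.eval₂_comp_left (Ideal.Quotient.mk I) (RingHom.id R) v f
  have hw := MvPolynomial.eval₂_comp_left (Ideal.Quotient.mk I) (RingHom.id R) w f
  have hvw : (Ideal.Quotient.mk I) ∘ v = (Ideal.Quotient.mk I) ∘ w := by
    funext i
    exact Ideal.Quotient.eq.mpr (h i)
  have hev : ∀ u : σ → R, MvPolynomial.eval u f = MvPolynomial.eval₂ (RingHom.id R) u f :=
    fun u => rfl
  rw [hev v, hev w, hv, hw, hvw]

/-- A homogeneous polynomial scales: `f (r • x) = r ^ d * f x`. -/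
lemma MvPolynomial.IsHomogeneous.eval_mul_pow {σ : Type*} [Fintype σ] {f : MvPolynomial σ R} {d : ℕ}
    (hf : f.IsHomogeneous d) (r : R) (x : σ → R) :
    MvPolynomial.eval (fun i => r * x i) f = r ^ d * MvPolynomial.eval x f := by
  rw [MvPolynomial.eval_eq, MvPolynomial.eval_eq, Finset.mul_sum]
  apply Finset.sum_congr rfl
  intro m hm
  have hdeg : (∑ i ∈ m.support, m i) = d := by
    have h1 : (Finsupp.weight 1) m = d := hf (MvPolynomial.mem_support_iff.mp hm)
    have h2 : m.degree = (Finsupp.weight 1) m := by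
      rw [Finsupp.degree_eq_weight_one]; rfl
    rw [← h2] at h1
    simpa [Finsupp.degree_apply] using h1
  calc MvPolynomial.coeff m f * ∏ i ∈ m.support, (r * x i) ^ m i
      = MvPolynomial.coeff m f *
        ((∏ i ∈ m.support, r ^ m i) * ∏ i ∈ m.support, x i ^ m i) := by
        rw [← Finset.prod_mul_distrib]
        simp_rw [mul_pow]
    _ = r ^ d * (MvPolynomial.coeff m f * ∏ i ∈ m.support, x i ^ m i) := by
        rw [Finset.prod_pow_eq_pow_sum, hdeg]; ring

/-- Key ideal-theoretic claim: if `f` is homogeneous, `f(P)` is a unit and `Q` is unimodular,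
then `f(Q)` together with the 2×2 minors of `P, Q` generate the unit ideal. -/
lemma aux_span_minors {n : ℕ} {f : MvPolynomial (Fin n) R} {d : ℕ} (hf : f.IsHomogeneous d)
    {P Q : Fin n → R} (hP : IsUnit (MvPolynomial.eval P f))
    (hQ : Ideal.span (Set.range Q) = ⊤) :
    Ideal.span ({MvPolynomial.eval Q f} ∪
      Set.range (fun ab : Fin n × Fin n => P ab.1 * Q ab.2 - P ab.2 * Q ab.1)) = ⊤ := by
  set T := Ideal.span ({MvPolynomial.eval Q f} ∪
      Set.range (fun ab : Fin n × Fin n => P ab.1 * Q ab.2 - P ab.2 * Q ab.1)) with hT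
  have hvT : MvPolynomial.eval Q f ∈ T := Ideal.subset_span (Or.inl rfl)
  have hmin : ∀ a b : Fin n, P a * Q b - P b * Q a ∈ T := fun a b =>
    Ideal.subset_span (Or.inr ⟨(a, b), rfl⟩)
  have key : ∀ a : Fin n, Q a ^ d ∈ T := by
    intro a
    have h1 : MvPolynomial.eval (fun b => Q a * P b) f
        - MvPolynomial.eval (fun b => P a * Q b) f ∈ T := by
      apply eval_sub_eval_mem
      intro b
      have heq : Q a * P b - P a * Q b = P b * Q a - P a * Q b := by ring
      rw [heq]
      exact hmin b a
    rw [hf.eval_mul_pow (Q a) P, hf.eval_mul_pow (P a) Q] at h1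
    have h2 : P a ^ d * MvPolynomial.eval Q f ∈ T := Ideal.mul_mem_left _ _ hvT
    have h3 : Q a ^ d * MvPolynomial.eval P f ∈ T := by
      have h4 := T.add_mem h1 h2
      simpa using h4
    obtain ⟨u, hu⟩ := hP
    have h5 : Q a ^ d = (Q a ^ d * MvPolynomial.eval P f) * ↑u⁻¹ := by
      rw [← hu, mul_assoc, Units.mul_inv, mul_one]
    rw [h5]
    exact Ideal.mul_mem_right _ _ h3
  have htop : Ideal.span ((· ^ d) '' Set.range Q) = ⊤ := Ideal.span_pow_eq_top _ hQ d
  rw [eq_top_iff, ← htop]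
  apply Ideal.span_le.mpr
  rintro _ ⟨_, ⟨a, rfl⟩, rfl⟩
  exact key a

/-- If `f` is homogeneous with unit values on the finite set `S`, and `Q` is unimodular, then
`f(Q)` together with values at `Q` of homogeneous degree-`S.card` polynomials vanishing on `S`
generate the unit ideal. -/
lemma aux_span_vanishing {n : ℕ} (Q : Fin n → R) (hQ : Ideal.span (Set.range Q) = ⊤)
    (S : Finset (Fin n → R)) :
    ∀ {d : ℕ} (f : MvPolynomial (Fin n) R), f.IsHomogeneous d →
      (∀ P ∈ S, IsUnit (MvPolynomial.eval P f)) →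
      Ideal.span ({MvPolynomial.eval Q f} ∪
        (MvPolynomial.eval Q '' {g : MvPolynomial (Fin n) R |
          g.IsHomogeneous S.card ∧ ∀ P ∈ S, MvPolynomial.eval P g = 0})) = ⊤ := by
  classical
  induction S using Finset.induction_on with
  | empty =>
    intro d f hf hunit
    rw [Ideal.eq_top_iff_one]
    apply Ideal.subset_span
    right
    refine ⟨1, ⟨by simpa using MvPolynomial.isHomogeneous_one (Fin n) R, by simp⟩, by simp⟩
  | @insert P S hPS ih =>
    intro d f hf hunit
    have hcard : (insert P S).card = S.card + 1 := Finset.card_insert_of_notMem hPS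
    have h1 := ih f hf (fun P' hP' => hunit P' (Finset.mem_insert_of_mem hP'))
    have h2 := aux_span_minors hf (hunit P (Finset.mem_insert_self P S)) hQ
    have hprod : Ideal.span
        (({MvPolynomial.eval Q f} ∪
          (MvPolynomial.eval Q '' {g : MvPolynomial (Fin n) R |
            g.IsHomogeneous S.card ∧ ∀ P' ∈ S, MvPolynomial.eval P' g = 0})) *
         ({MvPolynomial.eval Q f} ∪
          Set.range (fun ab : Fin n × Fin n => P ab.1 * Q ab.2 - P ab.2 * Q ab.1))) = ⊤ := by
      rw [← Ideal.span_mul_span', h1, h2, Ideal.top_mul]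
    rw [eq_top_iff, ← hprod]
    apply Ideal.span_le.mpr
    rintro z hz
    rw [Set.mem_mul] at hz
    obtain ⟨x, hx, y, hy, rfl⟩ := hz
    rcases hx with hx | hx
    · -- x = eval Q f
      rw [Set.mem_singleton_iff] at hx
      subst hx
      exact Ideal.mul_mem_right _ _ (Ideal.subset_span (Or.inl rfl))
    · obtain ⟨g, hg, rfl⟩ := hx
      rcases hy with hy | hy
      · rw [Set.mem_singleton_iff] at hy
        subst hy
        exact Ideal.mul_mem_left _ _ (Ideal.subset_span (Or.inl rfl))
      · obtain ⟨⟨a, b⟩, rfl⟩ := hy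
        apply Ideal.subset_span
        right
        refine ⟨g * (MvPolynomial.C (P a) * MvPolynomial.X b
          - MvPolynomial.C (P b) * MvPolynomial.X a), ⟨?_, ?_⟩, ?_⟩
        · rw [hcard]
          exact hg.1.mul (((MvPolynomial.isHomogeneous_C_mul_X (P a) b)).sub
            ((MvPolynomial.isHomogeneous_C_mul_X (P b) a)))
        · intro P' hP'
          rcases Finset.mem_insert.mp hP' with h | h
          · subst h
            simp [mul_comm]
          · rw [map_mul, hg.2 P' h, zero_mul]
        · simp

end Aux

/-- A commutative ring `R` has enough homogeneous polynomials if for every `n ≥ 1`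
and every finite set `S ⊆ R^n` whose tuples have coprime entries, there is a
nonconstant homogeneous polynomial taking unit values on `S`. -/
def HasEnoughHomogeneousPolynomials (R : Type*) [CommRing R] : Prop :=
  ∀ n : ℕ, 1 ≤ n → ∀ S : Finset (Fin n → R),
    (∀ Q ∈ S, Ideal.span (Set.range Q) = ⊤) →
    ∃ (f : MvPolynomial (Fin n) R) (d : ℕ), 1 ≤ d ∧ f.IsHomogeneous d ∧
      ∀ Q ∈ S, IsUnit (MvPolynomial.eval Q f)

/-- An integral domain of finite Krull dimension with power stable range one has
enough homogeneous polynomials. -/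
theorem hasEnoughHomogeneousPolynomials_of_powerStableRangeOne
    (R : Type*) [CommRing R] [IsDomain R]
    (hdim : ringKrullDim R < ⊤)
    (hpsr : ∀ x y : R, y ≠ 0 → Ideal.span {x, y} = ⊤ →
      ∃ (n : ℕ) (a : R), 1 ≤ n ∧ IsUnit (x ^ n + a * y)) :
    HasEnoughHomogeneousPolynomials R := by
  classical
  intro n hn S
  induction S using Finset.induction_on with
  | empty =>
    intro _
    exact ⟨MvPolynomial.X ⟨0, hn⟩, 1, le_refl 1, MvPolynomial.isHomogeneous_X _ _,
      fun Q hQ => absurd hQ (by simp)⟩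
  | @insert Q S hQS ih =>
    intro hS
    obtain ⟨f, d, hd, hf, hfS⟩ := ih (fun P hP => hS P (Finset.mem_insert_of_mem hP))
    have hQ : Ideal.span (Set.range Q) = ⊤ := hS Q (Finset.mem_insert_self Q S)
    set k := S.card with hk
    -- a linear form with value 1 at Q
    obtain ⟨c, hc⟩ : ∃ c : Fin n → R, ∑ i, c i * Q i = 1 := by
      have h1 : (1 : R) ∈ Ideal.span (Set.range Q) := hQ ▸ Submodule.mem_top
      obtain ⟨c, hc⟩ := (Submodule.mem_span_range_iff_exists_fun R).mp h1
      exact ⟨c, by simpa [smul_eq_mul] using hc⟩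
    set L : MvPolynomial (Fin n) R := ∑ i, MvPolynomial.C (c i) * MvPolynomial.X i with hL
    have hLhom : L.IsHomogeneous 1 :=
      MvPolynomial.IsHomogeneous.sum _ _ _
        (fun i _ => MvPolynomial.isHomogeneous_C_mul_X (c i) i)
    have hLQ : MvPolynomial.eval Q L = 1 := by
      rw [hL, map_sum]
      simpa using hc
    set F := f ^ (k + 1) with hF
    set D := d * (k + 1) with hD
    have hFhom : F.IsHomogeneous D := hf.pow _
    have hFS : ∀ P ∈ S, IsUnit (MvPolynomial.eval P F) := fun P hP => by
      rw [hF, map_pow]; exact (hfS P hP).pow _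
    set V := MvPolynomial.eval Q F with hV
    by_cases hVu : IsUnit V
    · refine ⟨F, D, ?_, hFhom, ?_⟩
      · have : 1 ≤ k + 1 := Nat.succ_le_succ (Nat.zero_le k)
        calc 1 = 1 * 1 := by ring
        _ ≤ d * (k + 1) := Nat.mul_le_mul hd this
      · intro P hP
        rcases Finset.mem_insert.mp hP with h | h
        · subst h; exact hVu
        · exact hFS P h
    · have htop := aux_span_vanishing Q hQ S F hFhom hFS
      have h1 : (1 : R) ∈ Ideal.span ({V} ∪
          (MvPolynomial.eval Q '' {g : MvPolynomial (Fin n) R |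
            g.IsHomogeneous k ∧ ∀ P ∈ S, MvPolynomial.eval P g = 0})) := by
        rw [htop]; exact Submodule.mem_top
      rw [Ideal.span_union] at h1
      obtain ⟨x, hx, y, hy, hxy⟩ := Submodule.mem_sup.mp h1
      obtain ⟨α, hα⟩ := Ideal.mem_span_singleton'.mp hx
      have hy0 : y ≠ 0 := by
        intro h0
        apply hVu
        apply IsUnit.of_mul_eq_one α
        rw [mul_comm, hα]
        rw [h0, add_zero] at hxy
        exact hxy
      have hspan : Ideal.span {V, y} = ⊤ := by
        rw [Ideal.eq_top_iff_one, Ideal.mem_span_pair]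
        exact ⟨α, 1, by rw [one_mul, hα]; exact hxy⟩
      obtain ⟨m, a, hm, hu⟩ := hpsr V y hy0 hspan
      obtain ⟨N, r, g, hrep⟩ := Submodule.mem_span_set'.mp hy
      set gg : Fin N → MvPolynomial (Fin n) R := fun i => ((g i).2).choose with hggdef
      have hgg1 : ∀ i, (gg i).IsHomogeneous k := fun i => ((g i).2).choose_spec.1.1
      have hgg2 : ∀ i, ∀ P ∈ S, MvPolynomial.eval P (gg i) = 0 :=
        fun i => ((g i).2).choose_spec.1.2
      have hgg3 : ∀ i, MvPolynomial.eval Q (gg i) = ↑(g i) :=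
        fun i => ((g i).2).choose_spec.2
      have hke : k + 1 ≤ D * m := by
        calc k + 1 = 1 * (k + 1) * 1 := by ring
        _ ≤ d * (k + 1) * m := Nat.mul_le_mul (Nat.mul_le_mul hd (le_refl _)) hm
      set M : MvPolynomial (Fin n) R :=
        ∑ i, MvPolynomial.C (a * r i) * (gg i * L ^ (D * m - k)) with hM
      have hMhom : M.IsHomogeneous (D * m) := by
        apply MvPolynomial.IsHomogeneous.sum
        intro i _
        have h0 : (MvPolynomial.C (a * r i) * (gg i * L ^ (D * m - k))).IsHomogeneous
            (0 + (k + 1 * (D * m - k))) :=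
          (MvPolynomial.isHomogeneous_C _ _).mul ((hgg1 i).mul (hLhom.pow _))
        have harith : 0 + (k + 1 * (D * m - k)) = D * m := by omega
        rwa [harith] at h0
      refine ⟨F ^ m + M, D * m, by omega, (hFhom.pow m).add hMhom, ?_⟩
      intro P hP
      rcases Finset.mem_insert.mp hP with h | h
      · subst h
        have hev : MvPolynomial.eval P (F ^ m + M) = V ^ m + a * y := by
          rw [map_add, map_pow, ← hV, hM, map_sum]
          congr 1
          have hterm : ∀ i, MvPolynomial.eval P
              (MvPolynomial.C (a * r i) * (gg i * L ^ (D * m - k)))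
              = a * (r i * ↑(g i)) := by
            intro i
            simp only [map_mul, map_pow, MvPolynomial.eval_C, hLQ, hgg3 i, one_pow]
            ring
          rw [Finset.sum_congr rfl (fun i _ => hterm i), ← Finset.mul_sum, ← hrep]
          simp [smul_eq_mul]
        rw [hev]
        exact hu
      · have hev : MvPolynomial.eval P (F ^ m + M) = (MvPolynomial.eval P F) ^ m := by
          rw [map_add, map_pow, hM, map_sum]
          have hterm : ∀ i ∈ Finset.univ, MvPolynomial.eval P
              (MvPolynomial.C (a * r i) * (gg i * L ^ (D * m - k))) = 0 := by
            intro i _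
            simp [map_mul, hgg2 i P h]
          rw [Finset.sum_eq_zero hterm, add_zero]
        rw [hev]
        exact (hFS P h).pow m
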